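/- Let $\kappa_1 \geq \kappa_2 \geq \cdots \geq \kappa_n > 0$, $P > 0$, $\theta > 0$ with $\sum_{i=1}^{m-1} P^2\kappa_i^2 < \theta \leq \sum_{i=1}^m P^2\kappa_i^2$ for some $m \leq n$. Consider vectors $x \in [0, P^2]^n$ satisfying $\sum_{i=1}^n x_i \kappa_i^2 = \theta$. Then the vector $x^*$ with $x^*_i = P^2$ for $i < m$, $x^*_m = (\theta - \sum_{i=1}^{m-1}P^2\kappa_i^2)/\kappa_m^2$, and $x^*_i = 0$ for $i > m$, is feasible and minimizes $\sum_{i=1}^n \sqrt{x_i}$ over all such feasible $x$. -/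

import Mathlib

lemma my_sqrt_add_le (a b : ℝ) (ha : 0 ≤ a) (hb : 0 ≤ b) :
    Real.sqrt (a + b) ≤ Real.sqrt a + Real.sqrt b := by
  rw [show a + b = (a+b) from rfl, ← Real.sqrt_sq (by positivity : (0:ℝ) ≤ Real.sqrt a + Real.sqrt b)]
  apply Real.sqrt_le_sqrt
  nlinarith [Real.sq_sqrt ha, Real.sq_sqrt hb, Real.sqrt_nonneg a, Real.sqrt_nonneg b,
    mul_nonneg (Real.sqrt_nonneg a) (Real.sqrt_nonneg b)]

lemma my_sqrt_sum (s : Finset ℕ) (f : ℕ → ℝ) (h : ∀ i ∈ s, 0 ≤ f i) :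
    Real.sqrt (∑ i ∈ s, f i) ≤ ∑ i ∈ s, Real.sqrt (f i) := by
  classical
  induction s using Finset.induction_on with
  | empty => simp
  | insert _ _ hnotmem ih =>
    rename_i a t
    rw [Finset.sum_insert hnotmem, Finset.sum_insert hnotmem]
    calc Real.sqrt (f a + ∑ i ∈ t, f i)
        ≤ Real.sqrt (f a) + Real.sqrt (∑ i ∈ t, f i) :=
          my_sqrt_add_le _ _ (h a (Finset.mem_insert_self a t))
            (Finset.sum_nonneg fun i hi => h i (Finset.mem_insert_of_mem hi))
      _ ≤ Real.sqrt (f a) + ∑ i ∈ t, Real.sqrt (f i) := by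
          gcongr
          exact ih fun i hi => h i (Finset.mem_insert_of_mem hi)

lemma my_diff_mono (x y s : ℝ) (hs : 0 ≤ s) (hsx : s ≤ x) (hxy : x ≤ y) :
    Real.sqrt y - Real.sqrt (y - s) ≤ Real.sqrt x - Real.sqrt (x - s) := by
  have hx0 : 0 ≤ x := le_trans hs hsx
  have hy0 : 0 ≤ y := le_trans hx0 hxy
  have h1 : y * (x - s) ≤ x * (y - s) := by nlinarith
  have h2 : Real.sqrt y * Real.sqrt (x - s) ≤ Real.sqrt x * Real.sqrt (y - s) := by
    rw [← Real.sqrt_mul hy0, ← Real.sqrt_mul hx0]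
    exact Real.sqrt_le_sqrt h1
  have hA := Real.sq_sqrt hx0
  have hB := Real.sq_sqrt (by linarith : (0:ℝ) ≤ x - s)
  have hC := Real.sq_sqrt hy0
  have hD := Real.sq_sqrt (by linarith : (0:ℝ) ≤ y - s)
  nlinarith [Real.sqrt_nonneg x, Real.sqrt_nonneg (x - s), Real.sqrt_nonneg y,
    Real.sqrt_nonneg (y - s), sq_nonneg (Real.sqrt x + Real.sqrt (y-s) - Real.sqrt y - Real.sqrt (x-s))]

lemma my_removal : ∀ (N : ℕ) (z κ : ℕ → ℝ) (κ0 P Δ : ℝ), 0 < κ0 → 0 < P →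
    (∀ i < N, 0 < κ i ∧ κ i ≤ κ0 ∧ 0 ≤ z i ∧ z i ≤ P^2) →
    0 ≤ Δ → Δ ≤ ∑ i ∈ Finset.range N, z i * κ i ^ 2 → Δ ≤ P^2 * κ0^2 →
    ∃ z' : ℕ → ℝ, (∀ i < N, 0 ≤ z' i ∧ z' i ≤ z i) ∧
      (∑ i ∈ Finset.range N, z' i * κ i ^ 2 = (∑ i ∈ Finset.range N, z i * κ i ^ 2) - Δ) ∧
      P - Real.sqrt (P^2 - Δ/κ0^2) + ∑ i ∈ Finset.range N, Real.sqrt (z' i)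
        ≤ ∑ i ∈ Finset.range N, Real.sqrt (z i) := by
  intro N
  induction N with
  | zero =>
    intro z κ κ0 P Δ hκ0 hP hbox hΔ0 hΔsum hΔcap
    simp only [Finset.range_zero, Finset.sum_empty] at *
    have hΔ : Δ = 0 := le_antisymm hΔsum hΔ0
    refine ⟨z, fun i hi => absurd hi (Nat.not_lt_zero i), by simp [hΔ], ?_⟩
    simp [hΔ, Real.sqrt_sq hP.le]
  | succ N ih =>
    intro z κ κ0 P Δ hκ0 hP hbox hΔ0 hΔsum hΔcap
    have hκN := hbox N (Nat.lt_succ_self N)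
    obtain ⟨hκNpos, hκNle, hzN0, hzNle⟩ := hκN
    have hκN2 : (0:ℝ) < κ N ^ 2 := by positivity
    have hyN0 : 0 ≤ z N * κ N ^ 2 := by positivity
    by_cases hc : Δ ≤ z N * κ N ^ 2
    · -- partial removal from coordinate N
      set z' : ℕ → ℝ := fun i => if i = N then z N - Δ / κ N ^ 2 else z i with hz'
      have hzN' : z' N = z N - Δ / κ N ^ 2 := by simp [hz']
      have hle : Δ / κ N ^ 2 ≤ z N := by
        rw [div_le_iff₀ hκN2]; linarith
      have hge0 : 0 ≤ Δ / κ N ^ 2 := by positivity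
      refine ⟨z', ?_, ?_, ?_⟩
      · intro i hi
        by_cases h : i = N
        · subst h; rw [hzN']; constructor <;> linarith
        · simp only [hz', if_neg h]
          exact ⟨(hbox i hi).2.2.1, le_refl _⟩
      · have hcg : ∑ i ∈ Finset.range N, z' i * κ i ^ 2 = ∑ i ∈ Finset.range N, z i * κ i ^ 2 :=
          Finset.sum_congr rfl (fun i hi => by
            rw [Finset.mem_range] at hi
            simp [hz', Nat.ne_of_lt hi])
        rw [Finset.sum_range_succ, Finset.sum_range_succ, hcg, hzN']
        have : (z N - Δ / κ N ^ 2) * κ N ^ 2 = z N * κ N ^ 2 - Δ := by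
          field_simp
        rw [this]; ring
      · have hcg : ∑ i ∈ Finset.range N, Real.sqrt (z' i) = ∑ i ∈ Finset.range N, Real.sqrt (z i) :=
          Finset.sum_congr rfl (fun i hi => by
            rw [Finset.mem_range] at hi
            simp [hz', Nat.ne_of_lt hi])
        rw [Finset.sum_range_succ, Finset.sum_range_succ, hcg, hzN']
        have key : P - Real.sqrt (P^2 - Δ/κ0^2) ≤ Real.sqrt (z N) - Real.sqrt (z N - Δ/κ N ^2) := by
          have h1 : Real.sqrt (P^2) - Real.sqrt (P^2 - Δ/κ N ^2)
              ≤ Real.sqrt (z N) - Real.sqrt (z N - Δ/κ N ^2) :=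
            my_diff_mono (z N) (P^2) (Δ/κ N ^2) hge0 hle hzNle
          have h2 : Real.sqrt (P^2 - Δ/κ N ^2) ≤ Real.sqrt (P^2 - Δ/κ0^2) := by
            apply Real.sqrt_le_sqrt
            have : Δ / κ0^2 ≤ Δ / κ N ^2 := by
              apply div_le_div_of_nonneg_left hΔ0 hκN2
              apply pow_le_pow_left₀ hκNpos.le hκNle
            linarith
          rw [Real.sqrt_sq hP.le] at h1
          linarith
        linarith
    · -- empty coordinate N, recurse
      push_neg at hc
      have hsumN : Δ - z N * κ N ^ 2 ≤ ∑ i ∈ Finset.range N, z i * κ i ^ 2 := by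
        rw [Finset.sum_range_succ] at hΔsum; linarith
      obtain ⟨z'', hb'', hs'', hc''⟩ := ih z κ κ0 P (Δ - z N * κ N ^ 2) hκ0 hP
        (fun i hi => hbox i (Nat.lt_succ_of_lt hi)) (by linarith) hsumN (by linarith)
      set z' : ℕ → ℝ := fun i => if i = N then 0 else z'' i with hz'
      have hcongr1 : ∑ i ∈ Finset.range N, z' i * κ i ^ 2 = ∑ i ∈ Finset.range N, z'' i * κ i ^ 2 :=
        Finset.sum_congr rfl (fun i hi => by
          rw [Finset.mem_range] at hi; simp [hz', Nat.ne_of_lt hi])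
      have hcongr2 : ∑ i ∈ Finset.range N, Real.sqrt (z' i) = ∑ i ∈ Finset.range N, Real.sqrt (z'' i) :=
        Finset.sum_congr rfl (fun i hi => by
          rw [Finset.mem_range] at hi; simp [hz', Nat.ne_of_lt hi])
      refine ⟨z', ?_, ?_, ?_⟩
      · intro i hi
        by_cases h : i = N
        · subst h; simp [hz']; exact hzN0
        · rcases Nat.lt_succ_iff_lt_or_eq.mp hi with h' | h'
          · simpa [hz', h] using hb'' i h'
          · exact absurd h' h
      · rw [Finset.sum_range_succ, Finset.sum_range_succ, hcongr1, hs'']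
        simp [hz']
        ring
      · rw [Finset.sum_range_succ, Finset.sum_range_succ, hcongr2]
        have hstep : Real.sqrt (P^2 - (Δ - z N * κ N ^2)/κ0^2)
            ≤ Real.sqrt (P^2 - Δ/κ0^2) + Real.sqrt (z N) := by
          have hκ02 : (0:ℝ) < κ0^2 := by positivity
          have ha : (0:ℝ) ≤ P^2 - Δ/κ0^2 := by
            rw [sub_nonneg, div_le_iff₀ hκ02]; linarith
          have hb : (0:ℝ) ≤ z N * κ N ^2 / κ0^2 := by positivity
          have heq : P^2 - (Δ - z N * κ N ^2)/κ0^2 = (P^2 - Δ/κ0^2) + z N * κ N ^2/κ0^2 := by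
            ring
          rw [heq]
          calc Real.sqrt ((P^2 - Δ/κ0^2) + z N * κ N ^2/κ0^2)
              ≤ Real.sqrt (P^2 - Δ/κ0^2) + Real.sqrt (z N * κ N ^2/κ0^2) :=
                my_sqrt_add_le _ _ ha hb
            _ ≤ Real.sqrt (P^2 - Δ/κ0^2) + Real.sqrt (z N) := by
                gcongr
                rw [div_le_iff₀ hκ02]
                nlinarith [pow_le_pow_left₀ hκNpos.le hκNle 2]
        simp only [hz', if_pos rfl, Real.sqrt_zero]
        linarith

lemma my_key : ∀ (m' n : ℕ) (κ : ℕ → ℝ) (P θ : ℝ) (x : ℕ → ℝ),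
    (∀ i < n, 0 < κ i) → (∀ i j, i ≤ j → j < n → κ j ≤ κ i) → 0 < P → 0 < θ →
    m' + 1 ≤ n →
    ((∑ i ∈ Finset.range m', P^2 * κ i ^ 2) < θ) →
    (θ ≤ ∑ i ∈ Finset.range (m'+1), P^2 * κ i ^ 2) →
    (∀ i < n, 0 ≤ x i ∧ x i ≤ P^2) →
    ((∑ i ∈ Finset.range n, x i * κ i ^ 2) = θ) →
    (m' : ℝ) * P + Real.sqrt (θ - ∑ i ∈ Finset.range m', P^2 * κ i ^ 2) / κ m'
      ≤ ∑ i ∈ Finset.range n, Real.sqrt (x i) := by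
  intro m'
  induction m' with
  | zero =>
    intro n κ P θ x hκpos hκsort hP hθ hmn hlow hhigh hbox hsum
    simp only [Finset.range_zero, Finset.sum_empty, sub_zero, Nat.cast_zero, zero_mul, zero_add]
    have hn : 0 < n := hmn
    have hκ0 : 0 < κ 0 := hκpos 0 hn
    have h1 : θ ≤ κ 0 ^ 2 * ∑ i ∈ Finset.range n, x i := by
      rw [← hsum, Finset.mul_sum]
      apply Finset.sum_le_sum
      intro i hi
      rw [Finset.mem_range] at hi
      have hκi : κ i ≤ κ 0 := hκsort 0 i (Nat.zero_le i) hi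
      have hκip : 0 < κ i := hκpos i hi
      have hxi := (hbox i hi).1
      have hsq : κ i ^ 2 ≤ κ 0 ^ 2 := by nlinarith
      nlinarith [mul_le_mul_of_nonneg_left hsq hxi]
    calc Real.sqrt θ / κ 0 ≤ Real.sqrt (κ 0 ^2 * ∑ i ∈ Finset.range n, x i) / κ 0 := by
            gcongr
            all_goals first | exact Real.sqrt_le_sqrt h1 | exact h1
      _ = Real.sqrt (∑ i ∈ Finset.range n, x i) := by
            rw [Real.sqrt_mul (by positivity : (0:ℝ) ≤ κ 0 ^ 2), Real.sqrt_sq hκ0.le]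
            exact mul_div_cancel_left₀ _ (ne_of_gt hκ0)
      _ ≤ ∑ i ∈ Finset.range n, Real.sqrt (x i) :=
            my_sqrt_sum _ _ (fun i hi => (hbox i (Finset.mem_range.mp hi)).1)
  | succ m' ih =>
    intro n κ P θ x hκpos hκsort hP hθ hmn hlow hhigh hbox hsum
    have hn : m' + 2 ≤ n := hmn
    have hκ0 : 0 < κ 0 := hκpos 0 (by omega)
    have hx0 := hbox 0 (by omega)
    -- θ > P^2 κ0^2
    have hκ0sum : P^2 * κ 0 ^2 ≤ ∑ i ∈ Finset.range (m'+1), P^2 * κ i ^ 2 := by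
      have : ∑ i ∈ Finset.range (m'+1), P^2 * κ i ^ 2
          = P^2 * κ 0 ^2 + ∑ i ∈ Finset.range m', P^2 * κ (i+1) ^ 2 := by
        rw [Finset.sum_range_succ']; ring
      rw [this]
      have : 0 ≤ ∑ i ∈ Finset.range m', P^2 * κ (i+1) ^ 2 :=
        Finset.sum_nonneg fun i _ => by positivity
      linarith
    have hθbig : P^2 * κ 0 ^ 2 < θ := lt_of_le_of_lt hκ0sum hlow
    -- set up removal on shifted coordinates
    set N := n - 1 with hN
    have hNn : N + 1 = n := by omega
    set z : ℕ → ℝ := fun i => x (i+1) with hz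
    set κ' : ℕ → ℝ := fun i => κ (i+1) with hκ'
    have hzsum : ∑ i ∈ Finset.range N, z i * κ' i ^ 2 = θ - x 0 * κ 0 ^ 2 := by
      rw [← hsum, ← hNn, Finset.sum_range_succ']
      simp [hz, hκ']
    set Δ := (P^2 - x 0) * κ 0 ^ 2 with hΔ
    have hΔ0 : 0 ≤ Δ := by
      rw [hΔ]
      have : 0 ≤ κ 0 ^ 2 := sq_nonneg _
      nlinarith [hx0.2]
    have hΔcap : Δ ≤ P^2 * κ 0 ^2 := by
      have : 0 ≤ x 0 * κ 0 ^2 := mul_nonneg hx0.1 (sq_nonneg _)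
      nlinarith [hx0.1]
    have hΔsum : Δ ≤ ∑ i ∈ Finset.range N, z i * κ' i ^ 2 := by
      rw [hzsum, hΔ]; nlinarith
    obtain ⟨z', hb', hs', hc'⟩ := my_removal N z κ' (κ 0) P Δ hκ0 hP
      (fun i hi => by
        have hi' : i + 1 < n := by omega
        exact ⟨hκpos (i+1) hi', hκsort 0 (i+1) (Nat.zero_le _) hi',
          (hbox (i+1) hi').1, (hbox (i+1) hi').2⟩)
      hΔ0 hΔsum hΔcap
    -- the removal cost simplification : P^2 - Δ/κ0^2 = x 0
    have hΔdiv : P^2 - Δ/(κ 0)^2 = x 0 := by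
      field_simp
      rw [hΔ]; ring
    rw [hΔdiv] at hc'
    -- apply IH
    have hz'sum : ∑ i ∈ Finset.range N, z' i * κ' i ^ 2 = θ - P^2 * κ 0 ^ 2 := by
      rw [hs', hzsum]; ring
    have hshift : ∀ k : ℕ, ∑ i ∈ Finset.range (k+1), P^2 * κ i ^2
        = P^2 * κ 0 ^2 + ∑ i ∈ Finset.range k, P^2 * κ' i ^ 2 := by
      intro k
      rw [Finset.sum_range_succ']
      simp [hκ']
      ring
    have ihc := ih N κ' P (θ - P^2 * κ 0 ^2) z'
      (fun i hi => hκpos (i+1) (by omega))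
      (fun i j hij hj => hκsort (i+1) (j+1) (by omega) (by omega))
      hP (by linarith)
      (by omega)
      (by have := hshift m'; linarith [hlow])
      (by have := hshift (m'+1); linarith [hhigh])
      (fun i hi => ⟨(hb' i hi).1, le_trans (hb' i hi).2 (hbox (i+1) (by omega)).2⟩)
      hz'sum
    -- combine
    have hsplit : ∑ i ∈ Finset.range n, Real.sqrt (x i)
        = Real.sqrt (x 0) + ∑ i ∈ Finset.range N, Real.sqrt (z i) := by
      rw [← hNn, Finset.sum_range_succ']
      simp [hz]
      ring
    have harg : θ - P^2*κ 0^2 - ∑ i ∈ Finset.range m', P^2 * κ' i ^2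
        = θ - ∑ i ∈ Finset.range (m'+1), P^2 * κ i ^2 := by
      have := hshift m'; linarith
    rw [harg] at ihc
    have hκ'm : κ' m' = κ (m'+1) := rfl
    rw [hκ'm] at ihc
    push_cast
    rw [hsplit]
    have : (m' : ℝ) * P + Real.sqrt (θ - ∑ i ∈ Finset.range (m'+1), P^2*κ i ^2) / κ (m'+1)
        ≤ ∑ i ∈ Finset.range N, Real.sqrt (z' i) := ihc
    have hfinal := hc'
    -- goal: (m'+1)*P + sqrt(...)/κ(m'+1) ≤ sqrt(x0) + ∑ sqrt z
    have hgoal' : ((m':ℝ)+1)*P + Real.sqrt (θ - ∑ i ∈ Finset.range (m'+1), P^2*κ i ^2) / κ (m'+1)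
        ≤ Real.sqrt (x 0) + ∑ i ∈ Finset.range N, Real.sqrt (z i) := by
      linarith
    linarith [hgoal']

theorem stmt_14 (n m : ℕ) (κ : ℕ → ℝ) (P θ : ℝ)
    (hκpos : ∀ i < n, 0 < κ i)
    (hκsorted : ∀ i j, i ≤ j → j < n → κ j ≤ κ i)
    (hP : 0 < P) (hθ : 0 < θ) (hm1 : 1 ≤ m) (hmn : m ≤ n)
    (hlow : (∑ i ∈ Finset.range (m - 1), P ^ 2 * κ i ^ 2) < θ)
    (hhigh : θ ≤ ∑ i ∈ Finset.range m, P ^ 2 * κ i ^ 2)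
    (xstar : ℕ → ℝ)
    (hxstar : ∀ i, xstar i =
      if i < m - 1 then P ^ 2
      else if i = m - 1 then
        (θ - ∑ j ∈ Finset.range (m - 1), P ^ 2 * κ j ^ 2) / κ (m - 1) ^ 2
      else 0) :
    (∀ i < n, 0 ≤ xstar i ∧ xstar i ≤ P ^ 2) ∧
    (∑ i ∈ Finset.range n, xstar i * κ i ^ 2 = θ) ∧
    (∀ x : ℕ → ℝ, (∀ i < n, 0 ≤ x i ∧ x i ≤ P ^ 2) →
      (∑ i ∈ Finset.range n, x i * κ i ^ 2 = θ) →
      (∑ i ∈ Finset.range n, Real.sqrt (xstar i)) ≤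
        ∑ i ∈ Finset.range n, Real.sqrt (x i)) := by
  set r : ℝ := θ - ∑ j ∈ Finset.range (m - 1), P ^ 2 * κ j ^ 2 with hr_def
  have hmn' : m - 1 < n := by omega
  have hκm : 0 < κ (m - 1) := hκpos _ hmn'
  have hκm2 : 0 < κ (m - 1) ^ 2 := by positivity
  have hrpos : 0 < r := by rw [hr_def]; linarith
  have hm_eq : m - 1 + 1 = m := by omega
  have hrle : r ≤ P ^ 2 * κ (m - 1) ^ 2 := by
    rw [hr_def]
    have : ∑ i ∈ Finset.range m, P ^ 2 * κ i ^ 2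
        = ∑ i ∈ Finset.range (m - 1), P ^ 2 * κ i ^ 2 + P ^ 2 * κ (m - 1) ^ 2 := by
      rw [← hm_eq, Finset.sum_range_succ]
      simp
    linarith
  set t : ℝ := r / κ (m - 1) ^ 2 with ht_def
  have ht0 : 0 ≤ t := le_of_lt (div_pos hrpos hκm2)
  have htle : t ≤ P ^ 2 := by
    rw [ht_def, div_le_iff₀ hκm2]; linarith
  have hxstar_ge : ∀ i, m ≤ i → xstar i = 0 := by
    intro i hi
    rw [hxstar i, if_neg (by omega), if_neg (by omega)]
  have hbounds : ∀ i < n, 0 ≤ xstar i ∧ xstar i ≤ P ^ 2 := by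
    intro i hi
    rw [hxstar i]
    split_ifs with h1 h2
    · exact ⟨sq_nonneg P, le_refl _⟩
    · exact ⟨ht0, htle⟩
    · exact ⟨le_refl 0, sq_nonneg P⟩
  have hsum_m : ∑ i ∈ Finset.range n, xstar i * κ i ^ 2
      = ∑ i ∈ Finset.range m, xstar i * κ i ^ 2 := by
    symm
    apply Finset.sum_subset (Finset.range_subset_range.2 hmn)
    intro i _ hi
    rw [Finset.mem_range, not_lt] at hi
    rw [hxstar_ge i hi, zero_mul]
  have hfeas : ∑ i ∈ Finset.range n, xstar i * κ i ^ 2 = θ := by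
    rw [hsum_m, ← hm_eq, Finset.sum_range_succ]
    have h1 : ∀ i ∈ Finset.range (m - 1), xstar i * κ i ^ 2 = P ^ 2 * κ i ^ 2 := by
      intro i hi
      rw [Finset.mem_range] at hi
      rw [hxstar i, if_pos hi]
    rw [Finset.sum_congr rfl h1]
    have h2 : xstar (m - 1) = t := by
      rw [hxstar (m - 1), if_neg (lt_irrefl _), if_pos rfl]
    rw [h2, ht_def, div_mul_cancel₀ _ (ne_of_gt hκm2)]
    rw [hr_def]; ring
  refine ⟨hbounds, hfeas, ?_⟩
  intro x hxbox hxsum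
  -- value of xstar
  have hval : ∑ i ∈ Finset.range n, Real.sqrt (xstar i)
      = ((m : ℝ) - 1) * P + Real.sqrt r / κ (m - 1) := by
    have hs1 : ∑ i ∈ Finset.range n, Real.sqrt (xstar i)
        = ∑ i ∈ Finset.range m, Real.sqrt (xstar i) := by
      symm
      apply Finset.sum_subset (Finset.range_subset_range.2 hmn)
      intro i _ hi
      rw [Finset.mem_range, not_lt] at hi
      rw [hxstar_ge i hi, Real.sqrt_zero]
    rw [hs1, ← hm_eq, Finset.sum_range_succ]
    have h1 : ∀ i ∈ Finset.range (m - 1), Real.sqrt (xstar i) = P := by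
      intro i hi
      rw [Finset.mem_range] at hi
      rw [hxstar i, if_pos hi, Real.sqrt_sq hP.le]
    rw [Finset.sum_congr rfl h1, Finset.sum_const, Finset.card_range, nsmul_eq_mul]
    have h2 : xstar (m - 1) = t := by
      rw [hxstar (m - 1), if_neg (lt_irrefl _), if_pos rfl]
    rw [h2, ht_def, Real.sqrt_div hrpos.le, Real.sqrt_sq hκm.le]
    have : ((m - 1 : ℕ) : ℝ) = (m : ℝ) - 1 := by
      have : (1:ℕ) ≤ m := hm1
      push_cast [Nat.cast_sub this]
      ring
    rw [this]
    simp [hm_eq]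
  have hkey := my_key (m - 1) n κ P θ x hκpos hκsorted hP hθ (by omega)
    hlow (by rw [hm_eq]; exact hhigh) hxbox hxsum
  rw [hval]
  have hcast : ((m - 1 : ℕ) : ℝ) = (m : ℝ) - 1 := by
    have h1 : (1:ℕ) ≤ m := hm1
    push_cast [Nat.cast_sub h1]
    ring
  rw [hcast] at hkey
  exact hkey
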